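/- If the entity-relationship graph 𝒢 is bipartite, then for every 𝒳 ∈ 𝔛 the support function satisfies ‖𝒳‖_𝒜^* = (1/2)·λ_max(B(𝒳)), and consequently ‖𝒳‖_𝒜^* ≤ (1/2)·‖B(𝒳)‖_2, where λ_max is the largest eigenvalue and ‖·‖_2 the spectral norm. -/

import Mathlib

open scoped BigOperators
open MeasureTheory ProbabilityTheory Matrix

/-- The conic hull of a set: all finite nonnegative combinations of its elements. -/
def coneHull {E : Type*} [AddCommMonoid E] [Module ℝ E] (s : Set E) : Set E :=
  {x | ∃ (m : ℕ) (l : Fin m → ℝ) (A : Fin m → E),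
    (∀ i, 0 ≤ l i) ∧ (∀ i, A i ∈ s) ∧ x = ∑ i, l i • A i}

/-- Row span of a matrix. -/
def rowSpan {ι κ : Type*} (M : Matrix ι κ ℝ) : Submodule ℝ (κ → ℝ) :=
  Submodule.span ℝ (Set.range M)

/-- Column span of a matrix. -/
def colSpan {ι κ : Type*} (M : Matrix ι κ ℝ) : Submodule ℝ (ι → ℝ) :=
  Submodule.span ℝ (Set.range Mᵀ)

/-- Orthogonality of two subspaces of `κ → ℝ` with respect to the dot product. -/
def PerpSub {κ : Type*} [Fintype κ] (p q : Submodule ℝ (κ → ℝ)) : Prop :=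
  ∀ x ∈ p, ∀ y ∈ q, x ⬝ᵥ y = 0

/-- Spectral norm (largest singular value) of a square real matrix. -/
noncomputable def specNorm {ι : Type*} [Fintype ι] (A : Matrix ι ι ℝ) : ℝ :=
  ⨆ x : {x : ι → ℝ // ∑ i, (x i)^2 = 1}, Real.sqrt (∑ i, (A.mulVec x.1 i)^2)

/-- Largest eigenvalue of a symmetric real matrix (Rayleigh quotient formulation). -/
noncomputable def lambdaMax {ι : Type*} [Fintype ι] (A : Matrix ι ι ℝ) : ℝ :=
  ⨆ x : {x : ι → ℝ // ∑ i, (x i)^2 = 1}, x.1 ⬝ᵥ A.mulVec x.1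

/-- A collective-matrix structure: `K` entity types with `n k` instances each,
`V` views, view `v` relating entity types `r v` (rows) and `c v` (columns),
with at most one view per unordered pair of (distinct) entity types. -/
structure CMStruct where
  K : ℕ
  V : ℕ
  n : Fin K → ℕ
  r : Fin V → Fin K
  c : Fin V → Fin K
  ne : ∀ v, r v ≠ c v
  uniq : ∀ v w : Fin V, (r v = r w ∧ c v = c w) ∨ (r v = c w ∧ c v = r w) → v = w

namespace CMStruct

variable (S : CMStruct)

/-- The index set of size `N = ∑ k, n k`. -/
abbrev Idx := Σ k : Fin S.K, Fin (S.n k)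

/-- `N = ∑ k, n k`. -/
abbrev N : ℕ := ∑ k, S.n k

/-- The space `𝔛` of collective matrices. -/
abbrev Space := ∀ v : Fin S.V, Matrix (Fin (S.n (S.r v))) (Fin (S.n (S.c v))) ℝ

/-- Inner product `⟨𝒳,𝒴⟩ = ∑ v, tr (Xᵥᵀ Yᵥ)`. -/
noncomputable def inner (X Y : S.Space) : ℝ := ∑ v, Matrix.trace ((X v)ᵀ * Y v)

/-- Frobenius norm `‖𝒳‖_F = √⟨𝒳,𝒳⟩`. -/
noncomputable def frobNorm (X : S.Space) : ℝ := Real.sqrt (S.inner X X)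

/-- `P_v` extracts the `(r v, c v)` block of an `N × N` matrix. -/
def Pv (v : Fin S.V) (Z : Matrix S.Idx S.Idx ℝ) :
    Matrix (Fin (S.n (S.r v))) (Fin (S.n (S.c v))) ℝ :=
  Matrix.of fun i j => Z ⟨S.r v, i⟩ ⟨S.c v, j⟩

/-- Place a matrix as the `(k₁,k₂)` block of an `N × N` matrix (zero elsewhere). -/
def place (k₁ k₂ : Fin S.K) (M : Matrix (Fin (S.n k₁)) (Fin (S.n k₂)) ℝ) :
    Matrix S.Idx S.Idx ℝ :=
  Matrix.of fun a b => ∑ i, ∑ j, if a = ⟨k₁, i⟩ ∧ b = ⟨k₂, j⟩ then M i j else 0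

/-- Symmetric block representation `B(𝒳)`. -/
def B (X : S.Space) : Matrix S.Idx S.Idx ℝ :=
  ∑ v, (S.place (S.r v) (S.c v) (X v) + S.place (S.c v) (S.r v) (X v)ᵀ)

/-- Generators of the atom set: `[P_v(u uᵀ)]_v` for unit vectors `u`. -/
def atomGen : Set S.Space :=
  {A | ∃ u : S.Idx → ℝ, (∑ a, (u a)^2 = 1) ∧ A = fun v => S.Pv v (Matrix.vecMulVec u u)}

/-- The atom set `𝒜 = ext (conv {[P_v(u uᵀ)]_v : ‖u‖₂ = 1})`. -/
def atoms : Set S.Space := Set.extremePoints ℝ (convexHull ℝ S.atomGen)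

/-- `𝒳` admits a joint factorization of some finite dimension. -/
def HasJF (X : S.Space) : Prop :=
  ∃ (R : ℕ) (U : ∀ k : Fin S.K, Matrix (Fin (S.n k)) (Fin R) ℝ),
    ∀ v, X v = U (S.r v) * (U (S.c v))ᵀ

/-- `𝔛̄`: collective matrices admitting a joint factorization. -/
def Xbar : Set S.Space := {X | S.HasJF X}

/-- Collective-matrix rank: minimal dimension of a joint factorization. -/
noncomputable def cmRank (X : S.Space) : ℕ :=
  sInf {R | ∃ U : ∀ k : Fin S.K, Matrix (Fin (S.n k)) (Fin R) ℝ,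
    ∀ v, X v = U (S.r v) * (U (S.c v))ᵀ}

/-- The atomic norm: the gauge of `conv 𝒜`. -/
noncomputable def atomicNorm (X : S.Space) : ℝ := gauge (convexHull ℝ S.atoms) X

/-- The support function `‖𝒳‖_𝒜^* = sup {⟨𝒳,𝒜'⟩ : 𝒜' ∈ 𝒜}`. -/
noncomputable def dualNorm (X : S.Space) : ℝ := sSup {t | ∃ A ∈ S.atoms, t = S.inner X A}

/-- The set of "sign" collective matrices `ℰ(ℳ)`. -/
def signSet (M : S.Space) : Set S.Space :=
  {E | S.atomicNorm M = S.inner E M ∧ S.dualNorm E = 1}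

/-- The entity-relationship graph is bipartite (2-colorable). -/
def Bipartite : Prop := ∃ f : Fin S.K → Bool, ∀ v, f (S.r v) ≠ f (S.c v)

/-- The entity-relationship graph `𝒢`. -/
def graph : SimpleGraph (Fin S.K) :=
  SimpleGraph.fromEdgeSet {e | ∃ v, e = s(S.r v, S.c v)}

/-- The standard basis collective matrix `E^{(v,i,j)}`. -/
def stdBasis (v : Fin S.V) (i : Fin (S.n (S.r v))) (j : Fin (S.n (S.c v))) : S.Space :=
  fun w =>
    if h : v = w then
      Matrix.single (Fin.cast (congrArg (fun x => S.n (S.r x)) h) i)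
        (Fin.cast (congrArg (fun x => S.n (S.c x)) h) j) (1 : ℝ)
    else 0

/-- Index type of view entries `(v, i, j)`. -/
abbrev IdxE := Σ v : Fin S.V, Fin (S.n (S.r v)) × Fin (S.n (S.c v))

/-- Standard basis indexed by a view-entry index. -/
def stdE (e : S.IdxE) : S.Space := S.stdBasis e.1 e.2.1 e.2.2

/-- `‖𝒳‖_max = max_{(v,i,j)} |⟨𝒳, E^{(v,i,j)}⟩|`. -/
noncomputable def maxNorm (X : S.Space) : ℝ := ⨆ e : S.IdxE, |S.inner X (S.stdE e)|

/-- Column index type of the entity matrix `𝕏ₖ` (of cardinality `m k`). -/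
def EIdx (k : Fin S.K) : Type :=
  (Σ v : {v : Fin S.V // S.r v = k}, Fin (S.n (S.c v.1))) ⊕
  (Σ v : {v : Fin S.V // S.c v = k}, Fin (S.n (S.r v.1)))

instance (k : Fin S.K) : Fintype (S.EIdx k) := by unfold EIdx; infer_instance

/-- The entity matrix `𝕏ₖ`: horizontal concatenation of the `X v` with `r v = k` and
the `(X v)ᵀ` with `c v = k`. -/
def entityMat (X : S.Space) (k : Fin S.K) : Matrix (Fin (S.n k)) (S.EIdx k) ℝ :=
  Matrix.of fun i e =>
    match e with
    | Sum.inl ⟨v, j⟩ => X v.1 (Fin.cast (congrArg S.n v.2.symm) i) j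
    | Sum.inr ⟨v, j⟩ => X v.1 j (Fin.cast (congrArg S.n v.2.symm) i)

/-- `m k = ∑ v, (n_{c v}·1[r v = k] + n_{r v}·1[c v = k])`, the column dimension of `𝕏ₖ`. -/
def mcol (k : Fin S.K) : ℕ :=
  ∑ v, ((if S.r v = k then S.n (S.c v) else 0) + (if S.c v = k then S.n (S.r v) else 0))

/-- The generating set of the model subspace `T` (for ground truth `M`). -/
def Tset (M : S.Space) : Set S.Space :=
  {Y | S.HasJF Y ∧ ∀ v,
    rowSpan (S.entityMat Y (S.r v)) ≤ rowSpan (S.entityMat M (S.r v)) ∨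
    rowSpan (S.entityMat Y (S.c v)) ≤ rowSpan (S.entityMat M (S.c v))}

/-- The model subspace `T` (the affine hull of `Tset`, which contains `0`,
hence equals the linear span). -/
def Tsub (M : S.Space) : Submodule ℝ S.Space := Submodule.span ℝ (S.Tset M)

/-- `T^⊥`. -/
def Tperp (M : S.Space) : Set S.Space :=
  {Y | S.HasJF Y ∧ ∀ v,
    PerpSub (rowSpan (Y v)) (rowSpan (M v)) ∧ PerpSub (colSpan (Y v)) (colSpan (M v))}

/-- `T^⊥` as a submodule. -/
def TperpSub (M : S.Space) : Submodule ℝ S.Space := Submodule.span ℝ (S.Tperp M)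

/-- `P` is the orthogonal projection onto the subspace `T` of `𝔛`. -/
def IsOrthProj (T : Submodule ℝ S.Space) (P : S.Space → S.Space) : Prop :=
  (∀ X, P X ∈ T) ∧ (∀ X, ∀ Y ∈ T, S.inner (X - P X) Y = 0)

/-- Sampling probabilities `p(v,i,j)·|Ω|⁻¹` where
`p(v,i,j) = |Ω_{r v}|/(2 n_{r v} m_{r v}) + |Ω_{c v}|/(2 n_{c v} m_{c v})`. -/
noncomputable def pweight (w : Fin S.K → ℝ) (e : S.IdxE) : ℝ :=
  w (S.r e.1) / (2 * (S.n (S.r e.1) : ℝ) * (S.mcol (S.r e.1) : ℝ)) +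
  w (S.c e.1) / (2 * (S.n (S.c e.1) : ℝ) * (S.mcol (S.c e.1) : ℝ))

/-- The operator `R_Ω`. -/
noncomputable def Romega (w : Fin S.K → ℝ) {m : ℕ} (Ω : Fin m → S.IdxE) (X : S.Space) :
    S.Space :=
  ∑ s, (S.inner X (S.stdE (Ω s)) / S.pweight w (Ω s)) • S.stdE (Ω s)

/-- The sampling operator `P_Ω`. -/
noncomputable def Pomega {m : ℕ} (Ω : Fin m → S.IdxE) (X : S.Space) : S.Space :=
  ∑ s, S.inner X (S.stdE (Ω s)) • S.stdE (Ω s)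

/-- `κ_Ω(N) = 3|Ω| √(max_k |Ω_k|/(n_k m_k)) / (min_k |Ω_k|/(n_k m_k))`. -/
noncomputable def kappa (w : Fin S.K → ℝ) (m : ℕ) : ℝ :=
  3 * m * Real.sqrt (⨆ k, w k / ((S.n k : ℝ) * (S.mcol k : ℝ))) /
    (⨅ k, w k / ((S.n k : ℝ) * (S.mcol k : ℝ)))

instance : MeasurableSpace S.IdxE := ⊤

end CMStruct

/-! ### Auxiliary material for the proof -/

noncomputable instance matrixNACG (m n : Type*) [Fintype m] [Fintype n] :
    NormedAddCommGroup (Matrix m n ℝ) := Matrix.normedAddCommGroup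

noncomputable instance matrixNS (m n : Type*) [Fintype m] [Fintype n] :
    NormedSpace ℝ (Matrix m n ℝ) := Matrix.normedSpace

section CompactHull

open Set

variable {E : Type*} [NormedAddCommGroup E] [NormedSpace ℝ E] [FiniteDimensional ℝ E]

private lemma sum_dite_fin {M : Type*} [AddCommMonoid M] {d m : ℕ} (hcard : m ≤ d)
    (F : Fin m → M) :
    (∑ i : Fin d, if h : (i : ℕ) < m then F ⟨i, h⟩ else 0) = ∑ i : Fin m, F i := by
  have h1 : (∑ i : Fin d, if h : (i : ℕ) < m then F ⟨i, h⟩ else 0)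
      = ∑ i ∈ Finset.range d, if h : i < m then F ⟨i, h⟩ else 0 :=
    Fin.sum_univ_eq_sum_range (fun i => if h : i < m then F ⟨i, h⟩ else 0) d
  rw [h1, ← Finset.sum_subset (Finset.range_subset_range.2 hcard)
    (fun i _ hi => dif_neg (by simpa using hi))]
  have h2 : (∑ i ∈ Finset.range m, if h : i < m then F ⟨i, h⟩ else 0)
      = ∑ i : Fin m, if h : (i : ℕ) < m then F ⟨i, h⟩ else 0 :=
    (Fin.sum_univ_eq_sum_range (fun i => if h : i < m then F ⟨i, h⟩ else 0) m).symm
  rw [h2]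
  exact Finset.sum_congr rfl fun i _ => by rw [dif_pos i.isLt]

theorem isCompact_convexHull_of_isCompact {s : Set E} (hs : IsCompact s) :
    IsCompact (convexHull ℝ s) := by
  rcases s.eq_empty_or_nonempty with rfl | ⟨s₀, hs₀⟩
  · simp only [convexHull_empty]; exact isCompact_empty
  set d : ℕ := Module.finrank ℝ E + 1 with hd
  set g : (Fin d → ℝ) × (Fin d → E) → E := fun p => ∑ i, p.1 i • p.2 i with hg
  have hgcont : Continuous g := by
    refine continuous_finset_sum _ fun i _ => ?_
    exact ((continuous_apply i).comp continuous_fst).smul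
      ((continuous_apply i).comp continuous_snd)
  set T : Set ((Fin d → ℝ) × (Fin d → E)) := (stdSimplex ℝ (Fin d)) ×ˢ (Set.univ.pi fun _ => s)
    with hT
  have hTcomp : IsCompact T := (isCompact_stdSimplex _ _).prod (isCompact_univ_pi fun _ => hs)
  have himg : convexHull ℝ s = g '' T := by
    apply Set.Subset.antisymm
    · intro x hx
      rw [convexHull_eq_union] at hx
      simp only [Set.mem_iUnion] at hx
      obtain ⟨t, hts, hai, hxt⟩ := hx
      have hcard : t.card ≤ d := by
        have h1 := hai.card_le_finrank_succ
        rw [Fintype.card_coe] at h1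
        have h2 := Submodule.finrank_le (vectorSpan ℝ (Set.range ((↑) : t → E)))
        omega
      rw [Finset.convexHull_eq] at hxt
      obtain ⟨w, hw0, hw1, hxw⟩ := hxt
      have hxsum : x = ∑ y ∈ t, w y • y := by
        rw [← hxw, Finset.centerMass_eq_of_sum_1 _ _ hw1]
        rfl
      let e : Fin t.card ≃ {y // y ∈ t} := (t.equivFin).symm
      classical
      refine ⟨(fun i => if h : (i : ℕ) < t.card then w (e ⟨i, h⟩) else 0,
               fun i => if h : (i : ℕ) < t.card then ((e ⟨i, h⟩ : E)) else s₀), ⟨⟨?_, ?_⟩, ?_⟩, ?_⟩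
      · intro i
        by_cases h : (i : ℕ) < t.card
        · simp only [h, dif_pos]
          exact hw0 _ (e ⟨i, h⟩).2
        · simp [h]
      · rw [sum_dite_fin hcard (fun i => w (e i)), Equiv.sum_comp e (fun y => w y.1),
          Finset.sum_coe_sort t w]
        exact hw1
      · intro i _
        by_cases h : (i : ℕ) < t.card
        · simp only [h, dif_pos]
          exact hts (e ⟨i, h⟩).2
        · simpa [h] using hs₀
      · show (∑ i : Fin d, _) = x
        have hsummand : ∀ i : Fin d,
            ((if h : (i : ℕ) < t.card then w (e ⟨i, h⟩) else 0) •
              (if h : (i : ℕ) < t.card then ((e ⟨i, h⟩ : E)) else s₀))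
            = if h : (i : ℕ) < t.card then w (e ⟨i, h⟩) • ((e ⟨i, h⟩ : E)) else 0 := by
          intro i
          by_cases h : (i : ℕ) < t.card <;> simp [h]
        calc (∑ i : Fin d, (if h : (i : ℕ) < t.card then w (e ⟨i, h⟩) else 0) •
                (if h : (i : ℕ) < t.card then ((e ⟨i, h⟩ : E)) else s₀))
            = ∑ i : Fin d, if h : (i : ℕ) < t.card then w (e ⟨i, h⟩) • ((e ⟨i, h⟩ : E)) else 0 :=
              Finset.sum_congr rfl fun i _ => hsummand i
          _ = ∑ i : Fin t.card, w (e i) • ((e i : E)) :=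
              sum_dite_fin hcard (fun i => w (e i) • ((e i : E)))
          _ = ∑ y : {y // y ∈ t}, w y • (y : E) := Equiv.sum_comp e (fun y => w y.1 • (y : E))
          _ = ∑ y ∈ t, w y • y := Finset.sum_coe_sort t (fun y => w y • y)
          _ = x := hxsum.symm
    · rintro _ ⟨⟨w, z⟩, ⟨hw, hz⟩, rfl⟩
      refine (convex_convexHull ℝ s).sum_mem (fun i _ => hw.1 i) hw.2
        fun i _ => subset_convexHull ℝ s (hz i trivial)
  rw [himg]
  exact hTcomp.image hgcont

/-- A continuous linear functional attains its max over a nonempty compact set at an extreme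
point of the convex hull. -/
theorem exists_extremePoint_max {s : Set E} (hs : IsCompact s) (hne : s.Nonempty)
    (l : E →L[ℝ] ℝ) :
    ∃ a ∈ (convexHull ℝ s).extremePoints ℝ, a ∈ s ∧ ∀ x ∈ s, l x ≤ l a := by
  have hC : IsCompact (convexHull ℝ s) := isCompact_convexHull_of_isCompact hs
  have hCne : (convexHull ℝ s).Nonempty := hne.mono (subset_convexHull ℝ s)
  set F : Set E := {y ∈ convexHull ℝ s | ∀ z ∈ convexHull ℝ s, l z ≤ l y} with hF
  have hexp : IsExposed ℝ (convexHull ℝ s) F := fun _ => ⟨l, rfl⟩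
  obtain ⟨z, hzC, hz⟩ := hC.exists_isMaxOn hCne l.continuous.continuousOn
  have hFne : F.Nonempty := ⟨z, hzC, fun y hy => hz hy⟩
  obtain ⟨a, ha⟩ := (hexp.isCompact hC).extremePoints_nonempty hFne
  have haext := hexp.isExtreme.extremePoints_subset_extremePoints ha
  refine ⟨a, haext, extremePoints_convexHull_subset haext, fun x hx => ?_⟩
  exact (extremePoints_subset ha).2 x (subset_convexHull ℝ s hx)

end CompactHull

namespace CMStruct

variable (S : CMStruct)

lemma inner_eq' (X Y : S.Space) :
    S.inner X Y = ∑ v, ∑ i, ∑ j, X v i j * Y v i j := by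
  unfold CMStruct.inner
  refine Finset.sum_congr rfl fun v _ => ?_
  rw [Matrix.trace]
  simp only [Matrix.diag_apply, Matrix.mul_apply, Matrix.transpose_apply]
  exact Finset.sum_comm

/-- `⟨X, ·⟩` as a linear map. -/
noncomputable def innerL (X : S.Space) : S.Space →ₗ[ℝ] ℝ where
  toFun Y := S.inner X Y
  map_add' Y Z := by
    simp only [inner_eq', Pi.add_apply, Matrix.add_apply, mul_add, Finset.sum_add_distrib]
  map_smul' c Y := by
    simp only [inner_eq', Pi.smul_apply, Matrix.smul_apply, smul_eq_mul, RingHom.id_apply,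
      Finset.mul_sum]
    refine Finset.sum_congr rfl fun v _ => Finset.sum_congr rfl fun i _ =>
      Finset.sum_congr rfl fun j _ => by ring

/-- `⟨X, ·⟩` as a continuous linear map. -/
noncomputable def innerCLM (X : S.Space) : S.Space →L[ℝ] ℝ :=
  LinearMap.toContinuousLinearMap (S.innerL X)

@[simp] lemma innerCLM_apply (X Y : S.Space) : S.innerCLM X Y = S.inner X Y := rfl

/-- The atom generated by a vector `u`. -/
def atomOf (u : S.Idx → ℝ) : S.Space := fun v => S.Pv v (Matrix.vecMulVec u u)

lemma atomGen_eq : S.atomGen = S.atomOf '' {u | ∑ a, (u a)^2 = 1} := by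
  ext A
  constructor
  · rintro ⟨u, hu, rfl⟩
    exact ⟨u, hu, rfl⟩
  · rintro ⟨u, hu, rfl⟩
    exact ⟨u, hu, rfl⟩

lemma inner_atomOf (X : S.Space) (u : S.Idx → ℝ) :
    S.inner X (S.atomOf u) =
      ∑ v, ∑ i, ∑ j, X v i j * (u ⟨S.r v, i⟩ * u ⟨S.c v, j⟩) := by
  rw [inner_eq']
  refine Finset.sum_congr rfl fun v _ => Finset.sum_congr rfl fun i _ =>
    Finset.sum_congr rfl fun j _ => rfl

lemma dot_quad (A : Matrix S.Idx S.Idx ℝ) (x : S.Idx → ℝ) :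
    x ⬝ᵥ A.mulVec x = ∑ a, ∑ b, A a b * (x a * x b) := by
  simp only [dotProduct, Matrix.mulVec, Finset.mul_sum]
  exact Finset.sum_congr rfl fun a _ => Finset.sum_congr rfl fun b _ => by ring

lemma sum_place (k₁ k₂ : Fin S.K) (M : Matrix (Fin (S.n k₁)) (Fin (S.n k₂)) ℝ)
    (f : S.Idx → S.Idx → ℝ) :
    ∑ a, ∑ b, S.place k₁ k₂ M a b * f a b = ∑ i, ∑ j, M i j * f ⟨k₁, i⟩ ⟨k₂, j⟩ := by
  classical
  have hplace : ∀ p : S.Idx × S.Idx, S.place k₁ k₂ M p.1 p.2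
      = ∑ q : Fin (S.n k₁) × Fin (S.n k₂),
          if p = (⟨k₁, q.1⟩, ⟨k₂, q.2⟩) then M q.1 q.2 else 0 := by
    intro p
    rw [Fintype.sum_prod_type]
    simp only [CMStruct.place, Matrix.of_apply, Prod.ext_iff]
  calc ∑ a, ∑ b, S.place k₁ k₂ M a b * f a b
      = ∑ p : S.Idx × S.Idx, S.place k₁ k₂ M p.1 p.2 * f p.1 p.2 :=
        (Fintype.sum_prod_type (f := fun p : S.Idx × S.Idx =>
          S.place k₁ k₂ M p.1 p.2 * f p.1 p.2)).symm
    _ = ∑ p : S.Idx × S.Idx, ∑ q : Fin (S.n k₁) × Fin (S.n k₂),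
          if p = (⟨k₁, q.1⟩, ⟨k₂, q.2⟩) then M q.1 q.2 * f p.1 p.2 else 0 := by
        refine Finset.sum_congr rfl fun p _ => ?_
        rw [hplace p, Finset.sum_mul]
        exact Finset.sum_congr rfl fun q _ => by rw [ite_mul, zero_mul]
    _ = ∑ q : Fin (S.n k₁) × Fin (S.n k₂), ∑ p : S.Idx × S.Idx,
          if p = (⟨k₁, q.1⟩, ⟨k₂, q.2⟩) then M q.1 q.2 * f p.1 p.2 else 0 :=
        Finset.sum_comm
    _ = ∑ q : Fin (S.n k₁) × Fin (S.n k₂), M q.1 q.2 * f ⟨k₁, q.1⟩ ⟨k₂, q.2⟩ := by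
        refine Finset.sum_congr rfl fun q _ => ?_
        rw [Finset.sum_ite_eq' Finset.univ ((⟨k₁, q.1⟩, ⟨k₂, q.2⟩) : S.Idx × S.Idx)
          (fun p => M q.1 q.2 * f p.1 p.2)]
        simp
    _ = ∑ i, ∑ j, M i j * f ⟨k₁, i⟩ ⟨k₂, j⟩ :=
        Fintype.sum_prod_type (f := fun q : Fin (S.n k₁) × Fin (S.n k₂) =>
          M q.1 q.2 * f ⟨k₁, q.1⟩ ⟨k₂, q.2⟩)

lemma quad_B (X : S.Space) (x : S.Idx → ℝ) :
    x ⬝ᵥ (S.B X).mulVec x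
      = 2 * ∑ v, ∑ i, ∑ j, X v i j * (x ⟨S.r v, i⟩ * x ⟨S.c v, j⟩) := by
  rw [dot_quad]
  have hB : ∀ a b, S.B X a b = ∑ v, (S.place (S.r v) (S.c v) (X v) a b
      + S.place (S.c v) (S.r v) (X v)ᵀ a b) := by
    intro a b
    rw [CMStruct.B]
    simp [Matrix.sum_apply]
  calc ∑ a, ∑ b, S.B X a b * (x a * x b)
      = ∑ a, ∑ b, ∑ v, (S.place (S.r v) (S.c v) (X v) a b * (x a * x b)
          + S.place (S.c v) (S.r v) (X v)ᵀ a b * (x a * x b)) := by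
        refine Finset.sum_congr rfl fun a _ => Finset.sum_congr rfl fun b _ => ?_
        rw [hB a b, Finset.sum_mul]
        exact Finset.sum_congr rfl fun v _ => add_mul _ _ _
    _ = ∑ a, ∑ v, ∑ b, (S.place (S.r v) (S.c v) (X v) a b * (x a * x b)
          + S.place (S.c v) (S.r v) (X v)ᵀ a b * (x a * x b)) :=
        Finset.sum_congr rfl fun a _ => Finset.sum_comm
    _ = ∑ v, ∑ a, ∑ b, (S.place (S.r v) (S.c v) (X v) a b * (x a * x b)
          + S.place (S.c v) (S.r v) (X v)ᵀ a b * (x a * x b)) := Finset.sum_comm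
    _ = ∑ v, ((∑ a, ∑ b, S.place (S.r v) (S.c v) (X v) a b * (x a * x b))
          + ∑ a, ∑ b, S.place (S.c v) (S.r v) (X v)ᵀ a b * (x a * x b)) := by
        refine Finset.sum_congr rfl fun v _ => ?_
        rw [← Finset.sum_add_distrib]
        exact Finset.sum_congr rfl fun a _ => Finset.sum_add_distrib
    _ = 2 * ∑ v, ∑ i, ∑ j, X v i j * (x ⟨S.r v, i⟩ * x ⟨S.c v, j⟩) := by
        rw [Finset.mul_sum]
        refine Finset.sum_congr rfl fun v _ => ?_
        rw [sum_place, sum_place]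
        have h2 : (∑ i, ∑ j, (X v)ᵀ i j * (x ⟨S.c v, i⟩ * x ⟨S.r v, j⟩))
            = ∑ i, ∑ j, X v i j * (x ⟨S.r v, i⟩ * x ⟨S.c v, j⟩) := by
          rw [Finset.sum_comm]
          refine Finset.sum_congr rfl fun i _ => Finset.sum_congr rfl fun j _ => ?_
          rw [Matrix.transpose_apply]
          ring
        rw [h2]
        ring

lemma inner_atomOf_quad (X : S.Space) (u : S.Idx → ℝ) :
    S.inner X (S.atomOf u) = (1/2 : ℝ) * (u ⬝ᵥ (S.B X).mulVec u) := by
  rw [inner_atomOf, quad_B]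
  ring

lemma sphere_compact : IsCompact {u : S.Idx → ℝ | ∑ a, (u a)^2 = 1} := by
  have hclosed : IsClosed {u : S.Idx → ℝ | ∑ a, (u a)^2 = 1} := by
    have hcont : Continuous fun u : S.Idx → ℝ => ∑ a, (u a)^2 :=
      continuous_finset_sum _ fun a _ => ((continuous_apply a).pow 2)
    exact isClosed_eq hcont continuous_const
  refine (isCompact_closedBall (0 : S.Idx → ℝ) 1).of_isClosed_subset hclosed ?_
  intro u hu
  rw [Metric.mem_closedBall, dist_zero_right]
  refine (pi_norm_le_iff_of_nonneg zero_le_one).2 fun a => ?_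
  rw [Real.norm_eq_abs, ← Real.sqrt_one, ← Real.sqrt_sq_eq_abs]
  refine Real.sqrt_le_sqrt ?_
  rw [← hu]
  exact Finset.single_le_sum (fun b _ => sq_nonneg (u b)) (Finset.mem_univ a)

lemma atomOf_continuous : Continuous S.atomOf := by
  refine continuous_pi fun v => continuous_matrix fun i j => ?_
  exact ((continuous_apply (⟨S.r v, i⟩ : S.Idx)).mul (continuous_apply (⟨S.c v, j⟩ : S.Idx)))

lemma atomGen_compact : IsCompact S.atomGen := by
  rw [atomGen_eq]
  exact (S.sphere_compact).image S.atomOf_continuous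

end CMStruct

/-- If `𝒢` is bipartite then `‖𝒳‖_𝒜^* = (1/2)·λ_max(B 𝒳)` and
consequently `‖𝒳‖_𝒜^* ≤ (1/2)·‖B 𝒳‖₂`. -/
theorem dualNorm_eq_half_lambdaMax (S : CMStruct) (hbip : S.Bipartite) (X : S.Space) :
    S.dualNorm X = (1/2 : ℝ) * lambdaMax (S.B X) ∧
    S.dualNorm X ≤ (1/2 : ℝ) * specNorm (S.B X) := by
  classical
  have hls : lambdaMax (S.B X) ≤ specNorm (S.B X) := by
    rcases isEmpty_or_nonempty {x : S.Idx → ℝ // ∑ i, (x i)^2 = 1} with hE | hNE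
    · unfold lambdaMax specNorm
      rw [Real.iSup_of_isEmpty, Real.iSup_of_isEmpty]
    · unfold lambdaMax specNorm
      have hbdd : BddAbove (Set.range fun x : {x : S.Idx → ℝ // ∑ i, (x i)^2 = 1} =>
          Real.sqrt (∑ i, ((S.B X).mulVec x.1 i)^2)) := by
        refine ⟨Real.sqrt (∑ i, ∑ j, (S.B X i j)^2), ?_⟩
        rintro t ⟨x, rfl⟩
        refine Real.sqrt_le_sqrt (Finset.sum_le_sum fun i _ => ?_)
        have hmv : (S.B X).mulVec x.1 i = ∑ j, S.B X i j * x.1 j := rfl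
        rw [hmv]
        calc (∑ j, S.B X i j * x.1 j)^2
            ≤ (∑ j, (S.B X i j)^2) * ∑ j, (x.1 j)^2 :=
              Finset.sum_mul_sq_le_sq_mul_sq Finset.univ _ _
          _ = ∑ j, (S.B X i j)^2 := by rw [x.2, mul_one]
      refine ciSup_le fun x => le_trans ?_ (le_ciSup hbdd x)
      have h1 : x.1 ⬝ᵥ (S.B X).mulVec x.1 = ∑ i, x.1 i * (S.B X).mulVec x.1 i := rfl
      rw [h1]
      calc ∑ i, x.1 i * (S.B X).mulVec x.1 i
          ≤ |∑ i, x.1 i * (S.B X).mulVec x.1 i| := le_abs_self _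
        _ = Real.sqrt ((∑ i, x.1 i * (S.B X).mulVec x.1 i)^2) :=
            (Real.sqrt_sq_eq_abs _).symm
        _ ≤ Real.sqrt (∑ i, ((S.B X).mulVec x.1 i)^2) := by
            refine Real.sqrt_le_sqrt ?_
            calc (∑ i, x.1 i * (S.B X).mulVec x.1 i)^2
                ≤ (∑ i, (x.1 i)^2) * ∑ i, ((S.B X).mulVec x.1 i)^2 :=
                  Finset.sum_mul_sq_le_sq_mul_sq Finset.univ _ _
              _ = ∑ i, ((S.B X).mulVec x.1 i)^2 := by rw [x.2, one_mul]
  have hmain : S.dualNorm X = (1/2 : ℝ) * lambdaMax (S.B X) := by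
    rcases isEmpty_or_nonempty {x : S.Idx → ℝ // ∑ i, (x i)^2 = 1} with hE | hNE
    · have hsph : {u : S.Idx → ℝ | ∑ a, (u a)^2 = 1} = ∅ := by
        ext u
        simp only [Set.mem_setOf_eq, Set.mem_empty_iff_false, iff_false]
        intro hu
        exact hE.elim ⟨u, hu⟩
      have hgen : S.atomGen = ∅ := by
        rw [S.atomGen_eq, hsph, Set.image_empty]
      have hatoms : S.atoms = ∅ := by
        unfold CMStruct.atoms
        rw [hgen]
        simp
      have hset : {t | ∃ A' ∈ S.atoms, t = S.inner X A'} = ∅ := by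
        rw [hatoms]; simp
      unfold CMStruct.dualNorm lambdaMax
      rw [hset, Real.sSup_empty, Real.iSup_of_isEmpty]
      ring
    · haveI := hNE
      obtain ⟨x₀⟩ := id hNE
      have hgen_ne : S.atomGen.Nonempty := by
        rw [S.atomGen_eq]
        exact ⟨_, ⟨x₀.1, x₀.2, rfl⟩⟩
      obtain ⟨a, haext, hagen, hamax⟩ :=
        exists_extremePoint_max S.atomGen_compact hgen_ne (S.innerCLM X)
      have ha_atoms : a ∈ S.atoms := haext
      obtain ⟨u₀, hu₀, hau⟩ : ∃ u, (∑ b, (u b)^2 = 1) ∧ a = S.atomOf u := by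
        have h := hagen
        rw [S.atomGen_eq] at h
        obtain ⟨u, hu, hua⟩ := h
        exact ⟨u, hu, hua.symm⟩
      have hamax' : ∀ u : S.Idx → ℝ, (∑ b, (u b)^2 = 1) →
          S.inner X (S.atomOf u) ≤ S.inner X a := by
        intro u hu
        have hmem : S.atomOf u ∈ S.atomGen := by
          rw [S.atomGen_eq]
          exact ⟨u, hu, rfl⟩
        exact hamax _ hmem
      have hbddq : BddAbove (Set.range fun x : {x : S.Idx → ℝ // ∑ i, (x i)^2 = 1} =>
          x.1 ⬝ᵥ (S.B X).mulVec x.1) := by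
        refine ⟨2 * S.inner X a, ?_⟩
        rintro t ⟨x, rfl⟩
        have hq : x.1 ⬝ᵥ (S.B X).mulVec x.1 = 2 * S.inner X (S.atomOf x.1) := by
          rw [S.inner_atomOf_quad]; ring
        show x.1 ⬝ᵥ (S.B X).mulVec x.1 ≤ 2 * S.inner X a
        rw [hq]
        linarith [hamax' x.1 x.2]
      have hlmax : lambdaMax (S.B X) = u₀ ⬝ᵥ (S.B X).mulVec u₀ := by
        unfold lambdaMax
        refine le_antisymm (ciSup_le fun x => ?_)
          (le_ciSup hbddq (⟨u₀, hu₀⟩ : {x : S.Idx → ℝ // ∑ i, (x i)^2 = 1}))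
        have hq : x.1 ⬝ᵥ (S.B X).mulVec x.1 = 2 * S.inner X (S.atomOf x.1) := by
          rw [S.inner_atomOf_quad]; ring
        have hq0 : u₀ ⬝ᵥ (S.B X).mulVec u₀ = 2 * S.inner X (S.atomOf u₀) := by
          rw [S.inner_atomOf_quad]; ring
        show x.1 ⬝ᵥ (S.B X).mulVec x.1 ≤ u₀ ⬝ᵥ (S.B X).mulVec u₀
        rw [hq, hq0, ← hau]
        linarith [hamax' x.1 x.2]
      have hDgreatest : IsGreatest {t | ∃ A' ∈ S.atoms, t = S.inner X A'} (S.inner X a) := by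
        constructor
        · exact ⟨a, ha_atoms, rfl⟩
        · rintro t ⟨A', hA', rfl⟩
          have hA'gen : A' ∈ S.atomGen := extremePoints_convexHull_subset hA'
          exact hamax A' hA'gen
      unfold CMStruct.dualNorm
      rw [hDgreatest.csSup_eq, hlmax, hau, S.inner_atomOf_quad]
  refine ⟨hmain, ?_⟩
  rw [hmain]
  have h2 : (0:ℝ) ≤ 1/2 := by norm_num
  exact mul_le_mul_of_nonneg_left hls h2
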